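/- Fix X ∈ ℂ with Re X > 0 and X not a real number in the interval (0,1]. Then as n → ∞, g_n(1/2 + 2nX)·exp(−n·Φ(X)) converges to ((X+1)/(X−1))^{1/4} (principal branch), where Φ(X) := X·Log(1 − 1/X²) + Log((X+1)/(X−1)) with Log the principal complex logarithm. -/

import Mathlib

open Complex Finset Filter Topology

/-- `g_n(x) := ∏_{m=1}^n (x+2m-1)/(x-2m)`. -/
noncomputable def gn (n : ℕ) (x : ℂ) : ℂ :=
  ∏ m ∈ Finset.Icc 1 n, (x + 2 * (m : ℂ) - 1) / (x - 2 * (m : ℂ))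

/-- `Φ(X) := X·Log(1 - 1/X²) + Log((X+1)/(X-1))`, with `Log` the principal branch of the
complex logarithm. -/
noncomputable def PhiFun (X : ℂ) : ℂ :=
  X * Complex.log (1 - 1 / X ^ 2) + Complex.log ((X + 1) / (X - 1))


/-! ### Auxiliary definitions for the proof -/

/-- `f(t) = Log((X+t)/(X-t))`. -/
noncomputable def fC (X : ℂ) (t : ℝ) : ℂ := Complex.log ((X + t) / (X - t))

/-- `f'(t) = 2X/(X² - t²)`. -/
noncomputable def fd (X : ℂ) (t : ℝ) : ℂ := 2 * X / (X ^ 2 - (t:ℂ) ^ 2)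

/-- Antiderivative of `fC`. -/
noncomputable def Gc (X : ℂ) (t : ℝ) : ℂ :=
  X * Complex.log (1 - (t:ℂ) ^ 2 / X ^ 2) + t * Complex.log ((X + t) / (X - t))

section aux
variable {X : ℂ} {t : ℝ}

lemma aux_X_ne (hX : 0 < X.re) : X ≠ 0 := fun h => by rw [h] at hX; simp at hX

lemma aux_sub_ne (hX : 0 < X.re) (hXr : ∀ r : ℝ, 0 < r → r ≤ 1 → X ≠ (r : ℂ))
    (ht1 : t ≤ 1) : X - (t:ℂ) ≠ 0 := by
  intro h
  have hXt : X = (t:ℂ) := by linear_combination h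
  have : 0 < t := by have := hX; rw [hXt] at this; simpa using this
  exact hXr t this ht1 hXt

lemma aux_add_ne (hX : 0 < X.re) (ht0 : 0 ≤ t) : X + (t:ℂ) ≠ 0 := by
  intro h
  have : (X + (t:ℂ)).re = 0 := by rw [h]; simp
  simp only [add_re, ofReal_re] at this
  linarith

lemma aux_slit_w (hX : 0 < X.re) (hXr : ∀ r : ℝ, 0 < r → r ≤ 1 → X ≠ (r : ℂ))
    (ht0 : 0 ≤ t) (ht1 : t ≤ 1) : (X + t) / (X - t) ∈ slitPlane := by
  have hns : 0 < Complex.normSq (X - t) := by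
    rw [Complex.normSq_pos]; exact aux_sub_ne hX hXr ht1
  rcases eq_or_lt_of_le ht0 with h0 | h0
  · rw [mem_slitPlane_iff]
    left
    simp only [← h0, ofReal_zero, add_zero, sub_zero]
    rw [div_self (by intro h; rw [h] at hX; simp at hX)]
    norm_num
  by_cases him : X.im = 0
  · have hre1 : 1 < X.re := by
      by_contra hle
      push_neg at hle
      exact hXr X.re hX hle (Complex.ext rfl (by simp [him]))
    rw [mem_slitPlane_iff]
    left
    rw [div_re]
    simp only [add_re, sub_re, ofReal_re, add_im, sub_im, ofReal_im, him, add_zero, sub_zero]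
    have h1 : 0 < (X.re + t) * (X.re - t) / normSq (X - ↑t) :=
      div_pos (by nlinarith) hns
    calc (0:ℝ) < (X.re + t) * (X.re - t) / normSq (X - ↑t) := h1
    _ ≤ _ := by rw [mul_zero, zero_div, add_zero]
  · rw [mem_slitPlane_iff]
    right
    rw [div_im]
    simp only [add_re, sub_re, ofReal_re, add_im, sub_im, ofReal_im, add_zero, sub_zero]
    intro h
    rw [div_sub_div_same, div_eq_zero_iff] at h
    rcases h with h | h
    · have : (-2 * t) * X.im = 0 := by linarith [h]
      rcases mul_eq_zero.mp this with h' | h'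
      · nlinarith
      · exact him h'
    · exact absurd h (ne_of_gt hns)

lemma aux_slit_u (hX : 0 < X.re) (hXr : ∀ r : ℝ, 0 < r → r ≤ 1 → X ≠ (r : ℂ))
    (ht0 : 0 ≤ t) (ht1 : t ≤ 1) : 1 - (t:ℂ)^2 / X^2 ∈ slitPlane := by
  have hX0 : X ≠ 0 := aux_X_ne hX
  obtain ⟨a, b, rfl⟩ : ∃ a b : ℝ, X = ⟨a, b⟩ := ⟨X.re, X.im, rfl⟩
  have ha : 0 < a := hX
  rcases eq_or_lt_of_le ht0 with h0 | h0
  · rw [← h0]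
    norm_num [one_mem_slitPlane]
  by_cases him : b = 0
  · subst him
    have hre1 : 1 < a := by
      by_contra hle
      push_neg at hle
      exact hXr a hX hle (Complex.ext rfl (by simp))
    rw [mem_slitPlane_iff]
    left
    rw [sub_re, div_re, one_re]
    simp only [pow_two, Complex.mul_re, Complex.mul_im, ofReal_re, ofReal_im,
      Complex.normSq_apply]
    norm_num
    have hN : (0:ℝ) < a*a*(a*a) := by positivity
    rw [div_lt_iff₀ hN]
    have h3 : t*t ≤ 1 := by nlinarith [mul_le_mul ht1 ht1 h0.le zero_le_one]
    have h4 : 1 < a*a := by nlinarith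
    nlinarith [mul_pos ha ha]
  · rw [mem_slitPlane_iff]
    right
    rw [sub_im, div_im, one_im]
    simp only [pow_two, Complex.mul_re, Complex.mul_im, ofReal_re, ofReal_im,
      Complex.normSq_apply]
    have hab : a * b ≠ 0 := mul_ne_zero (ne_of_gt ha) him
    have hN : (0:ℝ) < (a * a - b * b) * (a * a - b * b) + (a * b + b * a) * (a * b + b * a) := by
      nlinarith [mul_self_pos.mpr hab, sq_nonneg (a*a - b*b)]
    have h1 : (t * 0 + 0 * t) * (a * a - b * b) / ((a * a - b * b) * (a * a - b * b) + (a * b + b * a) * (a * b + b * a)) = 0 := by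
      simp
    rw [h1, zero_sub, zero_sub, neg_neg]
    apply div_ne_zero _ (ne_of_gt hN)
    have h2 : t * t - 0 * 0 = t * t := by ring
    rw [h2]
    exact mul_ne_zero (by positivity) (by intro h; apply hab; linarith)

lemma aux_sq_ne (hadd : X + (t:ℂ) ≠ 0) (hsub : X - (t:ℂ) ≠ 0) :
    X ^ 2 - (t:ℂ) ^ 2 ≠ 0 := by
  intro h
  have : (X - t) * (X + t) = 0 := by linear_combination h
  rcases mul_eq_zero.mp this with h' | h'
  exacts [hsub h', hadd h']

lemma hasDerivAt_fC' (hadd : X + (t:ℂ) ≠ 0) (hsub : X - (t:ℂ) ≠ 0)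
    (hslit : (X + t) / (X - t) ∈ slitPlane) :
    HasDerivAt (fC X) (fd X t) t := by
  have hsq := aux_sq_ne hadd hsub
  have h1 : HasDerivAt (fun z : ℂ => (X + z) / (X - z))
      ((1 * (X - (t:ℂ)) - (X + t) * (0 - 1)) / (X - t) ^ 2) (t:ℂ) :=
    HasDerivAt.div ((hasDerivAt_id _).const_add X)
      ((hasDerivAt_const _ X).sub (hasDerivAt_id _)) hsub
  have h2 := (h1.clog hslit).comp_ofReal
  convert h2 using 1
  · rfl
  rw [fd]
  field_simp
  ring

lemma hasDerivAt_fd' (hX0 : X ≠ 0) (hadd : X + (t:ℂ) ≠ 0) (hsub : X - (t:ℂ) ≠ 0) :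
    HasDerivAt (fd X) (4 * X * t / (X ^ 2 - (t:ℂ) ^ 2) ^ 2) t := by
  have hsq := aux_sq_ne hadd hsub
  have h1 : HasDerivAt (fun z : ℂ => 2 * X / (X ^ 2 - z ^ 2))
      ((0 * (X ^ 2 - (t:ℂ) ^ 2) - 2 * X * (0 - 2 * (t:ℂ) ^ 1)) / (X ^ 2 - (t:ℂ) ^ 2) ^ 2)
      (t:ℂ) :=
    HasDerivAt.div (hasDerivAt_const _ _)
      ((hasDerivAt_const _ (X ^ 2)).sub (hasDerivAt_pow 2 _)) hsq
  have h2 := h1.comp_ofReal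
  convert h2 using 1
  · rfl
  field_simp
  ring

lemma hasDerivAt_Gc' (hX0 : X ≠ 0) (hadd : X + (t:ℂ) ≠ 0) (hsub : X - (t:ℂ) ≠ 0)
    (hslitw : (X + t) / (X - t) ∈ slitPlane)
    (hslitu : 1 - (t:ℂ) ^ 2 / X ^ 2 ∈ slitPlane) :
    HasDerivAt (Gc X) (fC X t) t := by
  have hsq := aux_sq_ne hadd hsub
  have hu0 : 1 - (t:ℂ) ^ 2 / X ^ 2 ≠ 0 := slitPlane_ne_zero hslitu
  have hw0 : (X + (t:ℂ)) / (X - t) ≠ 0 := slitPlane_ne_zero hslitw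
  have h1 : HasDerivAt (fun z : ℂ => 1 - z ^ 2 / X ^ 2)
      (0 - (2 * (t:ℂ) ^ 1 * X ^ 2 - (t:ℂ) ^ 2 * 0) / (X ^ 2) ^ 2) (t:ℂ) :=
    (hasDerivAt_const _ (1:ℂ)).sub ((hasDerivAt_pow 2 _).div (hasDerivAt_const _ _)
      (pow_ne_zero 2 hX0))
  have h2 : HasDerivAt (fun z : ℂ => (X + z) / (X - z))
      ((1 * (X - (t:ℂ)) - (X + t) * (0 - 1)) / (X - t) ^ 2) (t:ℂ) :=
    HasDerivAt.div ((hasDerivAt_id _).const_add X)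
      ((hasDerivAt_const _ X).sub (hasDerivAt_id _)) hsub
  have h3 : HasDerivAt (fun z : ℂ =>
      X * Complex.log (1 - z ^ 2 / X ^ 2) + z * Complex.log ((X + z) / (X - z)))
      (X * ((0 - (2 * (t:ℂ) ^ 1 * X ^ 2 - (t:ℂ) ^ 2 * 0) / (X ^ 2) ^ 2) / (1 - (t:ℂ) ^ 2 / X ^ 2))
        + (1 * Complex.log ((X + (t:ℂ)) / (X - t)) + (t:ℂ) *
          ((1 * (X - (t:ℂ)) - (X + t) * (0 - 1)) / (X - t) ^ 2 / ((X + t) / (X - t))))) (t:ℂ) :=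
    ((h1.clog hslitu).const_mul X).add ((hasDerivAt_id _).mul (h2.clog hslitw))
  have h4 := h3.comp_ofReal
  convert h4 using 1
  · rfl
  rw [fC]
  have hX2 : X ^ 2 ≠ 0 := pow_ne_zero 2 hX0
  field_simp
  ring

variable (hX : 0 < X.re) (hXr : ∀ r : ℝ, 0 < r → r ≤ 1 → X ≠ (r : ℂ))
include hX hXr

lemma fC_hasDerivAt (ht : t ∈ Set.Icc (0:ℝ) 1) : HasDerivAt (fC X) (fd X t) t :=
  hasDerivAt_fC' (aux_add_ne hX ht.1) (aux_sub_ne hX hXr ht.2)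
    (aux_slit_w hX hXr ht.1 ht.2)

lemma fd_hasDerivAt (ht : t ∈ Set.Icc (0:ℝ) 1) :
    HasDerivAt (fd X) (4 * X * t / (X ^ 2 - (t:ℂ) ^ 2) ^ 2) t :=
  hasDerivAt_fd' (aux_X_ne hX) (aux_add_ne hX ht.1) (aux_sub_ne hX hXr ht.2)

lemma Gc_hasDerivAt (ht : t ∈ Set.Icc (0:ℝ) 1) : HasDerivAt (Gc X) (fC X t) t :=
  hasDerivAt_Gc' (aux_X_ne hX) (aux_add_ne hX ht.1) (aux_sub_ne hX hXr ht.2)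
    (aux_slit_w hX hXr ht.1 ht.2) (aux_slit_u hX hXr ht.1 ht.2)

lemma fC_contOn : ContinuousOn (fC X) (Set.Icc 0 1) :=
  fun s hs => (fC_hasDerivAt hX hXr hs).continuousAt.continuousWithinAt

lemma fd_contOn : ContinuousOn (fd X) (Set.Icc 0 1) :=
  fun s hs => (fd_hasDerivAt hX hXr hs).continuousAt.continuousWithinAt

lemma fC_intInt {a b : ℝ} (ha : a ∈ Set.Icc (0:ℝ) 1) (hb : b ∈ Set.Icc (0:ℝ) 1) :
    IntervalIntegrable (fC X) MeasureTheory.volume a b :=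
  ((fC_contOn hX hXr).mono (Set.uIcc_subset_Icc ha hb)).intervalIntegrable

lemma fd_intInt {a b : ℝ} (ha : a ∈ Set.Icc (0:ℝ) 1) (hb : b ∈ Set.Icc (0:ℝ) 1) :
    IntervalIntegrable (fd X) MeasureTheory.volume a b :=
  ((fd_contOn hX hXr).mono (Set.uIcc_subset_Icc ha hb)).intervalIntegrable

lemma fC_zero : fC X 0 = 0 := by
  rw [fC]
  simp only [ofReal_zero, add_zero, sub_zero]
  rw [div_self (aux_X_ne hX), Complex.log_one]

lemma integral_fC : ∫ t in (0:ℝ)..1, fC X t = PhiFun X := by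
  have h := intervalIntegral.integral_eq_sub_of_hasDerivAt
    (f := Gc X) (f' := fC X) (a := 0) (b := 1)
    (fun s hs => Gc_hasDerivAt hX hXr (by rwa [Set.uIcc_of_le zero_le_one] at hs))
    (fC_intInt hX hXr (Set.left_mem_Icc.2 zero_le_one) (Set.right_mem_Icc.2 zero_le_one))
  rw [h]
  rw [Gc, Gc]
  norm_num [PhiFun]

lemma integral_fd : ∫ t in (0:ℝ)..1, fd X t = fC X 1 := by
  have h := intervalIntegral.integral_eq_sub_of_hasDerivAt
    (f := fC X) (f' := fd X) (a := 0) (b := 1)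
    (fun s hs => fC_hasDerivAt hX hXr (by rwa [Set.uIcc_of_le zero_le_one] at hs))
    (fd_intInt hX hXr (Set.left_mem_Icc.2 zero_le_one) (Set.right_mem_Icc.2 zero_le_one))
  rw [h, fC_zero hX hXr, sub_zero]

lemma fd_lip : ∃ M : ℝ, 0 < M ∧ ∀ u ∈ Set.Icc (0:ℝ) 1, ∀ v ∈ Set.Icc (0:ℝ) 1,
    ‖fd X u - fd X v‖ ≤ M * |u - v| := by
  obtain ⟨t₀, ht₀, hmax⟩ := (isCompact_Icc (a := (0:ℝ)) (b := 1)).exists_isMaxOn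
    (f := fun s : ℝ => ‖4 * X * (s:ℂ) / (X ^ 2 - (s:ℂ) ^ 2) ^ 2‖)
    (Set.nonempty_Icc.2 zero_le_one)
    (by
      apply ContinuousOn.norm
      apply ContinuousOn.div
      · fun_prop
      · apply ContinuousOn.pow
        apply ContinuousOn.sub continuousOn_const
        fun_prop
      · intro s hs
        apply pow_ne_zero
        intro h
        have h1 : (X - s) * (X + s) = 0 := by linear_combination h
        rcases mul_eq_zero.mp h1 with h' | h'
        · exact aux_sub_ne hX hXr hs.2 h'
        · exact aux_add_ne hX hs.1 h')
  set M := ‖4 * X * (t₀:ℂ) / (X ^ 2 - (t₀:ℂ) ^ 2) ^ 2‖ + 1 with hM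
  refine ⟨M, by positivity, ?_⟩
  intro u hu v hv
  have hder : ∀ s ∈ Set.Icc (0:ℝ) 1, HasDerivWithinAt (fd X)
      (4 * X * s / (X ^ 2 - (s:ℂ) ^ 2) ^ 2) (Set.Icc 0 1) s :=
    fun s hs => (fd_hasDerivAt hX hXr hs).hasDerivWithinAt
  have hbd : ∀ s ∈ Set.Icc (0:ℝ) 1, ‖4 * X * (s:ℂ) / (X ^ 2 - (s:ℂ) ^ 2) ^ 2‖ ≤ M := by
    intro s hs
    have := hmax hs
    simp only [Set.mem_setOf_eq] at this
    calc ‖4 * X * (s:ℂ) / (X ^ 2 - (s:ℂ) ^ 2) ^ 2‖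
        ≤ ‖4 * X * (t₀:ℂ) / (X ^ 2 - (t₀:ℂ) ^ 2) ^ 2‖ := this
      _ ≤ M := by rw [hM]; linarith
  have := (convex_Icc (0:ℝ) 1).norm_image_sub_le_of_norm_hasDerivWithin_le hder hbd hv hu
  calc ‖fd X u - fd X v‖ ≤ M * ‖u - v‖ := this
  _ = M * |u - v| := by rw [Real.norm_eq_abs]

lemma taylor_bd {M : ℝ} (hM0 : 0 ≤ M) (hM : ∀ u ∈ Set.Icc (0:ℝ) 1, ∀ v ∈ Set.Icc (0:ℝ) 1,
      ‖fd X u - fd X v‖ ≤ M * |u - v|)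
    {b c : ℝ} (hb : b ∈ Set.Icc (0:ℝ) 1) (hc : c ∈ Set.Icc (0:ℝ) 1) :
    ‖fC X b - fC X c - fd X c * ((b:ℂ) - (c:ℂ))‖ ≤ M * |b - c| ^ 2 := by
  have hsub : Set.uIcc c b ⊆ Set.Icc (0:ℝ) 1 := Set.uIcc_subset_Icc hc hb
  have hftc : fC X b - fC X c = ∫ s in c..b, fd X s :=
    (intervalIntegral.integral_eq_sub_of_hasDerivAt
      (fun s hs => fC_hasDerivAt hX hXr (hsub hs))
      (((fd_contOn hX hXr).mono hsub).intervalIntegrable)).symm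
  have hconst : fd X c * ((b:ℂ) - (c:ℂ)) = ∫ _ in c..b, fd X c := by
    rw [intervalIntegral.integral_const, Complex.real_smul]
    push_cast
    ring
  rw [hftc, hconst, ← intervalIntegral.integral_sub
    (((fd_contOn hX hXr).mono hsub).intervalIntegrable) intervalIntegrable_const]
  have hbd : ∀ s ∈ Set.uIoc c b, ‖fd X s - fd X c‖ ≤ M * |b - c| := by
    intro s hs
    have hsI : s ∈ Set.Icc (0:ℝ) 1 := hsub (Set.uIoc_subset_uIcc hs)
    have habs : |s - c| ≤ |b - c| := by
      rcases Set.mem_uIoc.mp hs with ⟨h1, h2⟩ | ⟨h1, h2⟩ <;>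
        · rw [abs_le]
          constructor <;>
            linarith [le_abs_self (b - c), neg_abs_le (b - c), abs_nonneg (b - c)]
    calc ‖fd X s - fd X c‖ ≤ M * |s - c| := hM s hsI c hc
    _ ≤ M * |b - c| := mul_le_mul_of_nonneg_left habs hM0
  calc ‖∫ s in c..b, (fd X s - fd X c)‖ ≤ M * |b - c| * |b - c| :=
        intervalIntegral.norm_integral_le_of_norm_le_const hbd
  _ = M * |b - c| ^ 2 := by ring

lemma key_est : ∃ M : ℝ, 0 < M ∧ ∀ n : ℕ, 1 ≤ n →
    ‖(∑ m ∈ Finset.range n, fC X (((m:ℝ) + 3/4)/(n:ℝ))) - (n:ℂ) * PhiFun X - fC X 1 / 4‖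
      ≤ M / n := by
  obtain ⟨M, hM0, hMlip⟩ := fd_lip hX hXr
  refine ⟨2 * M, by positivity, ?_⟩
  intro n hn
  have hn0 : (0:ℝ) < n := by exact_mod_cast hn
  have hnC : (n:ℂ) ≠ 0 := Nat.cast_ne_zero.2 (by omega)
  set a : ℕ → ℝ := fun m => (m:ℝ)/n with ha
  set c : ℕ → ℝ := fun m => ((m:ℝ) + 3/4)/n with hc
  have hmem_a : ∀ m : ℕ, m ≤ n → a m ∈ Set.Icc (0:ℝ) 1 := by
    intro m hm
    constructor
    · positivity
    · rw [div_le_one hn0]; exact_mod_cast hm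
  have hmem_c : ∀ m : ℕ, m < n → c m ∈ Set.Icc (0:ℝ) 1 := by
    intro m hm
    constructor
    · positivity
    · rw [div_le_one hn0]
      have : (m:ℝ) + 1 ≤ n := by exact_mod_cast hm
      linarith
  have hsub : ∀ m : ℕ, m < n → Set.uIcc (a m) (a (m+1)) ⊆ Set.Icc (0:ℝ) 1 := by
    intro m hm
    exact Set.uIcc_subset_Icc (hmem_a m hm.le) (hmem_a (m+1) hm)
  have hintC : ∀ k : ℕ, k < n → IntervalIntegrable (fC X) MeasureTheory.volume (a k) (a (k+1)) :=
    fun k hk => ((fC_contOn hX hXr).mono (hsub k hk)).intervalIntegrable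
  have hintD : ∀ k : ℕ, k < n → IntervalIntegrable (fd X) MeasureTheory.volume (a k) (a (k+1)) :=
    fun k hk => ((fd_contOn hX hXr).mono (hsub k hk)).intervalIntegrable
  have ha0 : a 0 = 0 := by simp [ha]
  have han : a n = 1 := by simp only [ha]; exact div_self hn0.ne'
  have split1 : ∑ k ∈ Finset.range n, ∫ t in a k..a (k+1), fC X t = PhiFun X := by
    rw [intervalIntegral.sum_integral_adjacent_intervals hintC, ha0, han, integral_fC hX hXr]
  have split2 : ∑ k ∈ Finset.range n, ∫ t in a k..a (k+1), fd X t = fC X 1 := by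
    rw [intervalIntegral.sum_integral_adjacent_intervals hintD, ha0, han, integral_fd hX hXr]
  have halg : (∑ m ∈ Finset.range n, fC X (((m:ℝ) + 3/4)/(n:ℝ))) - (n:ℂ) * PhiFun X
        - fC X 1 / 4
      = ∑ m ∈ Finset.range n, ((fC X (c m) - (n:ℂ) * ∫ t in a m..a (m+1), fC X t)
          - (∫ t in a m..a (m+1), fd X t) / 4) := by
    rw [Finset.sum_sub_distrib, Finset.sum_sub_distrib, ← Finset.mul_sum, ← Finset.sum_div,
      split1, split2]
  rw [halg]
  have hterm : ∀ m ∈ Finset.range n,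
      ‖(fC X (c m) - (n:ℂ) * ∫ t in a m..a (m+1), fC X t)
        - (∫ t in a m..a (m+1), fd X t) / 4‖ ≤ 2 * M / (n:ℝ)^2 := by
    intro m hm
    rw [Finset.mem_range] at hm
    have hA := hmem_a m hm.le
    have hB := hmem_a (m+1) hm
    have hcm := hmem_c m hm
    have hAB : a m ≤ a (m+1) := by
      simp only [ha]
      rw [div_le_div_iff_of_pos_right hn0]
      push_cast; linarith
    have hcmA : a m ≤ c m := by
      simp only [ha, hc]
      rw [div_le_div_iff_of_pos_right hn0]
      linarith
    have hcmB : c m ≤ a (m+1) := by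
      simp only [ha, hc]
      rw [div_le_div_iff_of_pos_right hn0]
      push_cast; linarith
    have hBA : a (m+1) - a m = 1/n := by
      simp only [ha]
      push_cast
      field_simp
      ring
    have hfar : ∀ t ∈ Set.uIoc (a m) (a (m+1)), |t - c m| ≤ 1/n := by
      intro t ht
      rw [Set.uIoc_of_le hAB, Set.mem_Ioc] at ht
      rw [abs_le]
      constructor <;> linarith
    have hIoc_sub : Set.uIoc (a m) (a (m+1)) ⊆ Set.Icc (0:ℝ) 1 :=
      fun t ht => hsub m hm (Set.uIoc_subset_uIcc ht)
    -- the linear-part integral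
    have hIv : ∫ t in a m..a (m+1), ((t:ℂ) - ((c m : ℝ):ℂ)) = -(1/(4*(n:ℂ)^2)) := by
      have hfun : (fun t : ℝ => ((t:ℂ) - ((c m : ℝ):ℂ))) = fun t : ℝ => ((t - c m : ℝ) : ℂ) := by
        funext t; push_cast; ring
      rw [hfun, intervalIntegral.integral_ofReal]
      have hreal : (∫ t in a m..a (m+1), (t - c m)) = -(1/(4*(n:ℝ)^2)) := by
        rw [intervalIntegral.integral_sub intervalIntegral.intervalIntegrable_id
          intervalIntegrable_const, integral_id, intervalIntegral.integral_const,
          smul_eq_mul]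
        simp only [ha, hc]
        push_cast
        field_simp
        ring
      rw [hreal]
      push_cast
      ring
    have hlin_cont : Continuous (fun t : ℝ => fd X (c m) * ((t:ℂ) - ((c m:ℝ):ℂ))) :=
      continuous_const.mul (Complex.continuous_ofReal.sub continuous_const)
    have hI1eq : (∫ t in a m..a (m+1),
          (fC X t - fC X (c m) - fd X (c m) * ((t:ℂ) - ((c m:ℝ):ℂ))))
        = (∫ t in a m..a (m+1), fC X t) - (1/(n:ℂ)) * fC X (c m)
          + fd X (c m)/(4*(n:ℂ)^2) := by
      rw [intervalIntegral.integral_sub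
          ((hintC m hm).sub intervalIntegrable_const) (hlin_cont.intervalIntegrable _ _),
        intervalIntegral.integral_sub (hintC m hm) intervalIntegrable_const,
        intervalIntegral.integral_const, intervalIntegral.integral_const_mul, hIv,
        Complex.real_smul, hBA]
      push_cast
      ring
    have hI1bd : ‖∫ t in a m..a (m+1),
          (fC X t - fC X (c m) - fd X (c m) * ((t:ℂ) - ((c m:ℝ):ℂ)))‖
        ≤ M * (1/n)^2 * (1/n) := by
      have hb := intervalIntegral.norm_integral_le_of_norm_le_const
        (C := M * (1/(n:ℝ))^2)
        (f := fun t : ℝ => fC X t - fC X (c m) - fd X (c m) * ((t:ℂ) - ((c m:ℝ):ℂ)))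
        (a := a m) (b := a (m+1)) ?_
      · calc ‖_‖ ≤ M * (1/(n:ℝ))^2 * |a (m+1) - a m| := hb
        _ = M * (1/n)^2 * (1/n) := by
            have habs1 : |a (m+1) - a m| = 1/(n:ℝ) := by
              rw [hBA]; exact abs_of_pos (by positivity)
            rw [habs1]
      · intro t ht
        have h1 := taylor_bd hX hXr hM0.le hMlip (hIoc_sub ht) hcm
        calc ‖fC X t - fC X (c m) - fd X (c m) * ((t:ℂ) - ((c m:ℝ):ℂ))‖
            ≤ M * |t - c m| ^ 2 := h1
          _ ≤ M * (1/(n:ℝ))^2 := by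
              have h2 := hfar t ht
              have habs : (0:ℝ) ≤ |t - c m| := abs_nonneg _
              have hsq : |t - c m|^2 ≤ (1/(n:ℝ))^2 := by nlinarith
              exact mul_le_mul_of_nonneg_left hsq hM0.le
    have hI2eq : (∫ t in a m..a (m+1), (fd X t - fd X (c m)))
        = (∫ t in a m..a (m+1), fd X t) - fd X (c m) * (1/(n:ℂ)) := by
      rw [intervalIntegral.integral_sub (hintD m hm) intervalIntegrable_const,
        intervalIntegral.integral_const, Complex.real_smul, hBA]
      push_cast
      ring
    have hI2bd : ‖∫ t in a m..a (m+1), (fd X t - fd X (c m))‖ ≤ M * (1/n) * (1/n) := by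
      have hb := intervalIntegral.norm_integral_le_of_norm_le_const
        (C := M * (1/(n:ℝ)))
        (f := fun t : ℝ => fd X t - fd X (c m))
        (a := a m) (b := a (m+1)) ?_
      · calc ‖_‖ ≤ M * (1/(n:ℝ)) * |a (m+1) - a m| := hb
        _ = M * (1/n) * (1/n) := by
            have habs1 : |a (m+1) - a m| = 1/(n:ℝ) := by
              rw [hBA]; exact abs_of_pos (by positivity)
            rw [habs1]
      · intro t ht
        calc ‖fd X t - fd X (c m)‖ ≤ M * |t - c m| := hMlip t (hIoc_sub ht) (c m) hcm
        _ ≤ M * (1/(n:ℝ)) := mul_le_mul_of_nonneg_left (hfar t ht) hM0.le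
    have hterm_eq : (fC X (c m) - (n:ℂ) * ∫ t in a m..a (m+1), fC X t)
          - (∫ t in a m..a (m+1), fd X t) / 4
        = -(n:ℂ) * (∫ t in a m..a (m+1),
            (fC X t - fC X (c m) - fd X (c m) * ((t:ℂ) - ((c m:ℝ):ℂ))))
          - (∫ t in a m..a (m+1), (fd X t - fd X (c m))) / 4 := by
      have hI1eq' : (n:ℂ) * (∫ t in a m..a (m+1),
            (fC X t - fC X (c m) - fd X (c m) * ((t:ℂ) - ((c m:ℝ):ℂ))))
          = (n:ℂ) * (∫ t in a m..a (m+1), fC X t) - fC X (c m)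
            + fd X (c m)/(4*(n:ℂ)) := by
        rw [hI1eq]
        field_simp
      have hI2eq' : (∫ t in a m..a (m+1), (fd X t - fd X (c m)))
          = (∫ t in a m..a (m+1), fd X t) - fd X (c m)/(n:ℂ) := by
        rw [hI2eq]
        ring
      linear_combination hI1eq' + hI2eq'/4
    rw [hterm_eq]
    have hnn : ‖(n:ℂ)‖ = (n:ℝ) := by
      rw [Complex.norm_natCast]
    calc ‖-(n:ℂ) * (∫ t in a m..a (m+1),
            (fC X t - fC X (c m) - fd X (c m) * ((t:ℂ) - ((c m:ℝ):ℂ))))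
          - (∫ t in a m..a (m+1), (fd X t - fd X (c m))) / 4‖
        ≤ ‖-(n:ℂ) * (∫ t in a m..a (m+1),
            (fC X t - fC X (c m) - fd X (c m) * ((t:ℂ) - ((c m:ℝ):ℂ))))‖
          + ‖(∫ t in a m..a (m+1), (fd X t - fd X (c m))) / 4‖ := norm_sub_le _ _
      _ ≤ (n:ℝ) * (M * (1/n)^2 * (1/n)) + (M * (1/n) * (1/n)) / 4 := by
          apply add_le_add
          · rw [norm_mul, norm_neg, hnn]
            exact mul_le_mul_of_nonneg_left hI1bd (by positivity)
          · rw [norm_div]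
            simp only [Complex.norm_ofNat]
            gcongr
      _ ≤ 2 * M / (n:ℝ)^2 := by
          have heq : (n:ℝ) * (M * (1/n)^2 * (1/n)) + (M * (1/n) * (1/n)) / 4
              = 5*M/(4*(n:ℝ)^2) := by field_simp; ring
          rw [heq, div_le_div_iff₀ (by positivity) (by positivity)]
          nlinarith
  calc ‖∑ m ∈ Finset.range n, ((fC X (c m) - (n:ℂ) * ∫ t in a m..a (m+1), fC X t)
          - (∫ t in a m..a (m+1), fd X t) / 4)‖
      ≤ ∑ m ∈ Finset.range n, ‖(fC X (c m) - (n:ℂ) * ∫ t in a m..a (m+1), fC X t)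
          - (∫ t in a m..a (m+1), fd X t) / 4‖ := norm_sum_le _ _
    _ ≤ ∑ _m ∈ Finset.range n, (2 * M / (n:ℝ)^2) := Finset.sum_le_sum hterm
    _ = n * (2 * M / (n:ℝ)^2) := by rw [Finset.sum_const, Finset.card_range, nsmul_eq_mul]
    _ ≤ 2 * M / n := le_of_eq (by field_simp)

theorem stmt_13_aux :
    Tendsto (fun n : ℕ => gn n (1 / 2 + 2 * (n : ℂ) * X) *
        Complex.exp (-(n : ℂ) * PhiFun X)) atTop
      (𝓝 (((X + 1) / (X - 1)) ^ (1 / 4 : ℂ))) := by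
  obtain ⟨M, hM0, hest⟩ := key_est hX hXr
  set S : ℕ → ℂ := fun n => ∑ m ∈ Finset.range n, fC X (((m:ℝ) + 3/4)/(n:ℝ)) with hS
  have hlim : Tendsto (fun n : ℕ => S n - (n:ℂ) * PhiFun X) atTop (𝓝 (fC X 1 / 4)) := by
    rw [tendsto_iff_norm_sub_tendsto_zero]
    refine squeeze_zero' (Eventually.of_forall fun n => norm_nonneg _) ?_
      (tendsto_const_div_atTop_nhds_zero_nat M)
    filter_upwards [eventually_ge_atTop 1] with n hn using hest n hn
  have hexp : Tendsto (fun n : ℕ => Complex.exp (S n - (n:ℂ) * PhiFun X)) atTop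
      (𝓝 (Complex.exp (fC X 1 / 4))) :=
    (Complex.continuous_exp.continuousAt.tendsto).comp hlim
  have hval : Complex.exp (fC X 1 / 4) = ((X + 1) / (X - 1)) ^ (1 / 4 : ℂ) := by
    have hz : (X + 1) / (X - 1) ≠ 0 := by
      have h := aux_slit_w hX hXr (t := 1) zero_le_one le_rfl
      have := Complex.slitPlane_ne_zero h
      simpa using this
    rw [Complex.cpow_def_of_ne_zero hz]
    congr 1
    rw [fC]
    push_cast
    ring
  rw [← hval]
  apply hexp.congr'
  filter_upwards [eventually_ge_atTop 1] with n hn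
  have hn0 : (0:ℝ) < n := by exact_mod_cast hn
  have hnC : (n:ℂ) ≠ 0 := Nat.cast_ne_zero.2 (by omega)
  have h2n : 2 * (n:ℂ) ≠ 0 := by simp [hnC]
  -- product equality
  have hprod : gn n (1 / 2 + 2 * (n : ℂ) * X) = Complex.exp (S n) := by
    rw [hS, Complex.exp_sum, gn, ← Finset.Ico_add_one_right_eq_Icc, Finset.prod_Ico_eq_prod_range]
    simp only [Nat.add_sub_cancel]
    apply Finset.prod_congr rfl
    intro i hi
    rw [Finset.mem_range] at hi
    have hc0 : (0:ℝ) ≤ ((i:ℝ) + 3/4)/n := by positivity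
    have hc1 : ((i:ℝ) + 3/4)/n ≤ 1 := by
      rw [div_le_one hn0]
      have : (i:ℝ) + 1 ≤ n := by exact_mod_cast hi
      linarith
    have hcast : ((((i:ℝ) + 3/4)/(n:ℝ) : ℝ) : ℂ) = ((i:ℂ) + 3/4)/(n:ℂ) := by
      push_cast
      ring
    rw [fC, Complex.exp_log
      (div_ne_zero (aux_add_ne hX hc0) (aux_sub_ne hX hXr hc1))]
    rw [hcast]
    have hnum : 1 / 2 + 2 * (n:ℂ) * X + 2 * ((1 + i : ℕ):ℂ) - 1
        = 2 * (n:ℂ) * (X + ((i:ℂ) + 3/4)/(n:ℂ)) := by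
      push_cast
      field_simp
      ring
    have hden : 1 / 2 + 2 * (n:ℂ) * X - 2 * ((1 + i : ℕ):ℂ)
        = 2 * (n:ℂ) * (X - ((i:ℂ) + 3/4)/(n:ℂ)) := by
      push_cast
      field_simp
      ring
    rw [hnum, hden, mul_div_mul_left _ _ h2n]
  rw [hprod, ← Complex.exp_add]
  congr 1
  ring

end aux

/-- Fix `X ∈ ℂ` with `Re X > 0`, not a real number in `(0,1]`. Then
`g_n(1/2 + 2nX)·exp(-n·Φ(X)) → ((X+1)/(X-1))^(1/4)` (principal branch) as `n → ∞`. -/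
theorem stmt_13 (X : ℂ) (hX : 0 < X.re)
    (hXr : ∀ r : ℝ, 0 < r → r ≤ 1 → X ≠ (r : ℂ)) :
    Tendsto (fun n : ℕ => gn n (1 / 2 + 2 * (n : ℂ) * X) *
        Complex.exp (-(n : ℂ) * PhiFun X)) atTop
      (𝓝 (((X + 1) / (X - 1)) ^ (1 / 4 : ℂ))) := by
  exact stmt_13_aux hX hXr
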